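/- Under the inverse prior posterior covariance Σ_m = A^{-1} - S_m (S_mᵀ A S_m)^{-1} S_mᵀ and any v in the column space of S_m, Σ_m (A v) = 0; conversely, if Σ_m (A v) = 0 then v ∈ col(S_m). Hence A maps col(S_m) bijectively onto ker(Σ_m). -/

import Mathlib

open Matrix
open scoped Matrix

/-- For `Σ_m = A⁻¹ - S (Sᵀ A S)⁻¹ Sᵀ`: for every `v` in the column space
of `S`, `Σ_m (A v) = 0`; conversely `Σ_m (A v) = 0` implies `v ∈ col(S)`; hence `A`
maps `col(S)` bijectively onto `ker(Σ_m)`. -/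
theorem A_maps_colspace_bijectively_onto_nullspace
    (d m : ℕ) (A : Matrix (Fin d) (Fin d) ℝ) (hA : A.PosDef)
    (S : Matrix (Fin d) (Fin m) ℝ)
    (hS : LinearIndependent ℝ (fun j : Fin m => Sᵀ j)) :
    (∀ v ∈ Submodule.span ℝ (Set.range Sᵀ),
      (A⁻¹ - S * (Sᵀ * A * S)⁻¹ * Sᵀ).mulVec (A.mulVec v) = 0) ∧
    (∀ v : Fin d → ℝ,
      (A⁻¹ - S * (Sᵀ * A * S)⁻¹ * Sᵀ).mulVec (A.mulVec v) = 0 →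
      v ∈ Submodule.span ℝ (Set.range Sᵀ)) ∧
    Set.BijOn A.mulVec
      (Submodule.span ℝ (Set.range Sᵀ) : Set (Fin d → ℝ))
      ((LinearMap.ker (A⁻¹ - S * (Sᵀ * A * S)⁻¹ * Sᵀ).mulVecLin : Submodule ℝ (Fin d → ℝ)) :
        Set (Fin d → ℝ)) := by
  have hSinj : Function.Injective S.mulVec := Matrix.mulVec_injective_iff.mpr hS
  -- `Sᵀ A S` is positive definite
  have hM : (Sᵀ * A * S).PosDef := by
    refine Matrix.PosDef.of_dotProduct_mulVec_pos ?_ ?_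
    · have h := Matrix.isHermitian_conjTranspose_mul_mul S hA.isHermitian
      simpa [Matrix.conjTranspose_eq_transpose_of_trivial] using h
    · intro x hx
      have hSx : S.mulVec x ≠ 0 := by
        intro h
        exact hx (hSinj (by simp [h]))
      have h1 := hA.dotProduct_mulVec_pos hSx
      have h2 : star x ⬝ᵥ (Sᵀ * A * S) *ᵥ x = star (S.mulVec x) ⬝ᵥ A *ᵥ (S.mulVec x) := by
        simp only [star_trivial]
        rw [← Matrix.mulVec_mulVec, ← Matrix.mulVec_mulVec, Matrix.dotProduct_mulVec,
          Matrix.vecMul_transpose]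
      rw [h2]
      exact h1
  have hAunit : IsUnit A.det := isUnit_iff_ne_zero.mpr (ne_of_gt hA.det_pos)
  have hMunit : IsUnit (Sᵀ * A * S).det := isUnit_iff_ne_zero.mpr (ne_of_gt hM.det_pos)
  set M := Sᵀ * A * S with hMdef
  set Sig := A⁻¹ - S * M⁻¹ * Sᵀ with hSig
  -- key computation
  have key : ∀ v : Fin d → ℝ,
      Sig.mulVec (A.mulVec v) = v - S.mulVec ((M⁻¹ * Sᵀ * A).mulVec v) := by
    intro v
    have : Sig.mulVec (A.mulVec v) = (Sig * A).mulVec v := by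
      rw [Matrix.mulVec_mulVec]
    rw [this, hSig, Matrix.sub_mul, Matrix.nonsing_inv_mul A hAunit, Matrix.sub_mulVec,
      Matrix.one_mulVec]
    simp [Matrix.mulVec_mulVec, Matrix.mul_assoc]
  have hspan : (Submodule.span ℝ (Set.range Sᵀ)) = LinearMap.range S.mulVecLin :=
    (Matrix.range_mulVecLin S).symm
  have part1 : ∀ v ∈ Submodule.span ℝ (Set.range Sᵀ), Sig.mulVec (A.mulVec v) = 0 := by
    intro v hv
    rw [hspan] at hv
    obtain ⟨c, rfl⟩ := hv
    rw [key]
    have : (M⁻¹ * Sᵀ * A).mulVec (S.mulVecLin c) = c := by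
      show (M⁻¹ * Sᵀ * A).mulVec (S.mulVec c) = c
      rw [Matrix.mulVec_mulVec, Matrix.mul_assoc M⁻¹ Sᵀ A, Matrix.mul_assoc M⁻¹ (Sᵀ * A) S,
        ← hMdef, Matrix.nonsing_inv_mul M hMunit, Matrix.one_mulVec]
    rw [this]
    simp [Matrix.mulVecLin]
  have part2 : ∀ v : Fin d → ℝ, Sig.mulVec (A.mulVec v) = 0 →
      v ∈ Submodule.span ℝ (Set.range Sᵀ) := by
    intro v hv
    rw [key] at hv
    have hv' : v = S.mulVec ((M⁻¹ * Sᵀ * A).mulVec v) := by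
      have := sub_eq_zero.mp hv
      exact this
    rw [hspan]
    exact ⟨(M⁻¹ * Sᵀ * A).mulVec v, hv'.symm⟩
  refine ⟨part1, part2, ?_, ?_, ?_⟩
  · intro v hv
    simpa [LinearMap.mem_ker, Matrix.mulVecLin] using part1 v hv
  · intro x _ y _ h
    exact Matrix.mulVec_injective_iff_isUnit.mpr ((Matrix.isUnit_iff_isUnit_det A).mpr hAunit) h
  · intro w hw
    refine ⟨A⁻¹.mulVec w, ?_, ?_⟩
    · apply part2
      have hAw : A.mulVec (A⁻¹.mulVec w) = w := by
        rw [Matrix.mulVec_mulVec, Matrix.mul_nonsing_inv A hAunit, Matrix.one_mulVec]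
      rw [hAw]
      simpa [LinearMap.mem_ker, Matrix.mulVecLin] using hw
    · rw [Matrix.mulVec_mulVec, Matrix.mul_nonsing_inv A hAunit, Matrix.one_mulVec]
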